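/- In the localisation O_q(M_{m,n})[X_{1n}⁻¹] (with m,n ≥ 2), each element X'_{ij} := X_{ij} − q⁻¹X_{1j}X_{in}X_{1n}⁻¹, for 2 ≤ i ≤ m and 1 ≤ j ≤ n−1, commutes with X_{1n}. -/
import Mathlib


noncomputable section
open scoped BigOperators

/-- The defining relations of an `m × n` `q`-quantum matrix. -/
def IsQMat {k A : Type*} [Field k] [Ring A] [Algebra k A] (q : k) {m n : ℕ}
    (X : Fin m → Fin n → A) : Prop :=
  (∀ (i : Fin m) (j l : Fin n), j < l → X i j * X i l = q • (X i l * X i j)) ∧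
  (∀ (i r : Fin m) (j : Fin n), i < r → X i j * X r j = q • (X r j * X i j)) ∧
  (∀ (i r : Fin m) (j l : Fin n), i < r → j < l → X i l * X r j = X r j * X i l) ∧
  (∀ (i r : Fin m) (j l : Fin n), i < r → j < l →
    X i j * X r l - X r l * X i j = (q - q⁻¹) • (X i l * X r j))

/-- The relations defining `O_q(M_{m,n})` as a quotient of the free algebra. -/
inductive QMRel (k : Type*) [Field k] (q : k) (m n : ℕ) :
    FreeAlgebra k (Fin m × Fin n) → FreeAlgebra k (Fin m × Fin n) → Prop
  | row (i : Fin m) (j l : Fin n) (h : j < l) :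
      QMRel k q m n (FreeAlgebra.ι k (i, j) * FreeAlgebra.ι k (i, l))
        (q • (FreeAlgebra.ι k (i, l) * FreeAlgebra.ι k (i, j)))
  | col (i r : Fin m) (j : Fin n) (h : i < r) :
      QMRel k q m n (FreeAlgebra.ι k (i, j) * FreeAlgebra.ι k (r, j))
        (q • (FreeAlgebra.ι k (r, j) * FreeAlgebra.ι k (i, j)))
  | anti (i r : Fin m) (j l : Fin n) (h1 : i < r) (h2 : j < l) :
      QMRel k q m n (FreeAlgebra.ι k (i, l) * FreeAlgebra.ι k (r, j))
        (FreeAlgebra.ι k (r, j) * FreeAlgebra.ι k (i, l))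
  | diag (i r : Fin m) (j l : Fin n) (h1 : i < r) (h2 : j < l) :
      QMRel k q m n (FreeAlgebra.ι k (i, j) * FreeAlgebra.ι k (r, l))
        (FreeAlgebra.ι k (r, l) * FreeAlgebra.ι k (i, j) +
          (q - q⁻¹) • (FreeAlgebra.ι k (i, l) * FreeAlgebra.ι k (r, j)))

/-- The quantum matrix algebra `O_q(M_{m,n})`. -/
abbrev OqM (k : Type*) [Field k] (q : k) (m n : ℕ) := RingQuot (QMRel k q m n)

/-- The canonical generators `X_{ij}` of `O_q(M_{m,n})`. -/
def qX (k : Type*) [Field k] (q : k) (m n : ℕ) (i : Fin m) (j : Fin n) : OqM k q m n :=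
  RingQuot.mkAlgHom k (QMRel k q m n) (FreeAlgebra.ι k (i, j))

/-- The number of inversions (the length `ℓ(σ)`) of a permutation of `Fin t`. -/
def invCount {t : ℕ} (σ : Equiv.Perm (Fin t)) : ℕ :=
  Finset.card (Finset.univ.filter (fun p : Fin t × Fin t => p.1 < p.2 ∧ σ p.2 < σ p.1))

/-- The quantum determinant of a `t × t` matrix with entries in an algebra:
`Σ_σ (-q)^{ℓ(σ)} M_{1,σ(1)} ⋯ M_{t,σ(t)}`. -/
def qdet {k : Type*} [Field k] {A : Type*} [Ring A] [Algebra k A] (q : k) {t : ℕ}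
    (M : Fin t → Fin t → A) : A :=
  ∑ σ : Equiv.Perm (Fin t), ((-q) ^ invCount σ) • (List.ofFn (fun i => M i (σ i))).prod

/-- The quantum minor `[I|J]` of the matrix `X` on rows `I` and columns `J`. -/
def qminor {k : Type*} [Field k] {A : Type*} [Ring A] [Algebra k A] (q : k) {m n t : ℕ}
    (X : Fin m → Fin n → A) (I : Finset (Fin m)) (J : Finset (Fin n))
    (hI : I.card = t) (hJ : J.card = t) : A :=
  qdet q (fun a b => X (I.orderIsoOfFin hI a) (J.orderIsoOfFin hJ b))

/-- The elements `X'_{ij} = X_{ij} - q⁻¹ X_{1j} X_{in} X_{1n}⁻¹` in a localisation of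
`O_q(M_{m,n})` at the normal element `X_{1n}`, where `φ` is the localisation map and
`u = X_{1n}⁻¹`. -/
def Xp {k B : Type*} [Field k] [Ring B] [Algebra k B] (q : k) {m n : ℕ}
    (hm : 0 < m) (hn : 0 < n) (φ : OqM k q m n →ₐ[k] B) (u : B)
    (i : Fin m) (j : Fin n) : B :=
  φ (qX k q m n i j) -
    q⁻¹ • (φ (qX k q m n ⟨0, hm⟩ j) * φ (qX k q m n i ⟨n - 1, by omega⟩) * u)

set_option maxHeartbeats 1000000 in
/-- In the localisation `O_q(M_{m,n})[X_{1n}⁻¹]`, each `X'_{ij}` (for `2 ≤ i ≤ m`,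
`1 ≤ j ≤ n-1`, in one-based indexing) commutes with `X_{1n}`. -/
theorem xprime_commutes_with_x1n {k B : Type*} [Field k] [Ring B] [Algebra k B]
    (q : k) (hq : q ≠ 0) {m n : ℕ} (hm : 2 ≤ m) (hn : 2 ≤ n)
    (φ : OqM k q m n →ₐ[k] B) (hφ : Function.Injective φ) (u : B)
    (hu1 : φ (qX k q m n ⟨0, by omega⟩ ⟨n - 1, by omega⟩) * u = 1)
    (hu2 : u * φ (qX k q m n ⟨0, by omega⟩ ⟨n - 1, by omega⟩) = 1)
    (hloc : ∀ b : B, ∃ (a : OqM k q m n) (p : ℕ), b = φ a * u ^ p)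
    (i : Fin m) (hi : 1 ≤ (i : ℕ)) (j : Fin n) (hj : (j : ℕ) < n - 1) :
    Xp q (by omega) (by omega) φ u i j * φ (qX k q m n ⟨0, by omega⟩ ⟨n - 1, by omega⟩)
      = φ (qX k q m n ⟨0, by omega⟩ ⟨n - 1, by omega⟩) * Xp q (by omega) (by omega) φ u i j := by
  have h0i : (⟨0, by omega⟩ : Fin m) < i := by
    simp only [Fin.lt_def]; omega
  have hjn : j < (⟨n - 1, by omega⟩ : Fin n) := by
    simp only [Fin.lt_def]; omega
  set a := φ (qX k q m n i j) with ha
  set b := φ (qX k q m n ⟨0, by omega⟩ j) with hb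
  set c := φ (qX k q m n i ⟨n - 1, by omega⟩) with hc
  set x := φ (qX k q m n ⟨0, by omega⟩ ⟨n - 1, by omega⟩) with hx
  have hbx : b * x = q • (x * b) := by
    have := RingQuot.mkAlgHom_rel k
      (QMRel.row (k := k) (q := q) (⟨0, by omega⟩ : Fin m) j ⟨n - 1, by omega⟩ hjn)
    have h2 := congrArg φ this
    simpa [qX, hb, hx, map_mul, map_smul] using h2
  have hxc : x * c = q • (c * x) := by
    have := RingQuot.mkAlgHom_rel k
      (QMRel.col (k := k) (q := q) (⟨0, by omega⟩ : Fin m) i (⟨n - 1, by omega⟩ : Fin n) h0i)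
    have h2 := congrArg φ this
    simpa [qX, hc, hx, map_mul, map_smul] using h2
  have hxa : x * a = a * x := by
    have := RingQuot.mkAlgHom_rel k
      (QMRel.anti (k := k) (q := q) (⟨0, by omega⟩ : Fin m) i j
        (⟨n - 1, by omega⟩ : Fin n) h0i hjn)
    have h2 := congrArg φ this
    simpa [qX, ha, hx, map_mul] using h2
  have hcx : c * x = q⁻¹ • (x * c) := by
    rw [hxc, smul_smul, inv_mul_cancel₀ hq, one_smul]
  have key : b * c * x = x * (b * c) := by
    calc b * c * x = q⁻¹ • (b * (x * c)) := by
          rw [mul_assoc, hcx, mul_smul_comm]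
      _ = q⁻¹ • (b * x * c) := by rw [mul_assoc]
      _ = q⁻¹ • (q • (x * b * c)) := by rw [hbx, smul_mul_assoc]
      _ = x * (b * c) := by rw [smul_smul, inv_mul_cancel₀ hq, one_smul, mul_assoc]
  have hXp : Xp q (by omega : 0 < m) (by omega : 0 < n) φ u i j
      = a - q⁻¹ • (b * c * u) := rfl
  rw [hXp, sub_mul, mul_sub, hxa, smul_mul_assoc, mul_smul_comm]
  congr 1
  have h1 : b * c * u * x = b * c := by
    rw [mul_assoc, hu2, mul_one]
  have h2 : x * (b * c * u) = b * c := by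
    have e : x * (b * c * u) = x * (b * c) * u := by simp only [mul_assoc]
    rw [e, ← key, mul_assoc, hu1, mul_one]
  rw [h1, h2]
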